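/- arXiv:2210.06760 — 3 statements merged into one kernel-verified Lean document; each statement's English description precedes it below -/
import Mathlib

section
/- Let d ≥ 2 be an integer, s ∈ (0,1), p ≥ 1. For r ∈ (0,1) define Φ(r) = |S^{d-2}| · ∫_{-1}^{1} (1-t²)^{(d-3)/2} / (1 - 2tr + r²)^{(d+sp)/2} dt. Then the function r ↦ (1-r)^{sp+1}·Φ(r) is bounded on (0,1). -/
open Real Set MeasureTheory

set_option maxHeartbeats 1000000 in
/-- With `Φ(r) = |S^{d-2}| ∫_{-1}^1 (1-t²)^{(d-3)/2} (1-2tr+r²)^{-(d+sp)/2} dt`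
(where `|S^{d-2}| = 2 π^{(d-1)/2} / Γ((d-1)/2)` is the surface measure of the unit
sphere in `ℝ^{d-1}`), the function `r ↦ (1-r)^{sp+1} Φ(r)` is bounded on `(0,1)`. -/
theorem stmt_4 (d : ℕ) (s p : ℝ) (hd : 2 ≤ d) (hs : 0 < s) (hs1 : s < 1) (hp : 1 ≤ p) :
    ∃ M : ℝ, ∀ r ∈ Ioo (0 : ℝ) 1,
      (1 - r) ^ (s * p + 1) *
          ((2 * π ^ (((d : ℝ) - 1) / 2) / Real.Gamma (((d : ℝ) - 1) / 2)) *
            ∫ t in Ioo (-1 : ℝ) 1,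
              (1 - t ^ 2) ^ (((d : ℝ) - 3) / 2) /
                (1 - 2 * t * r + r ^ 2) ^ (((d : ℝ) + s * p) / 2)) ≤ M := by
  have hd2 : (2 : ℝ) ≤ (d : ℝ) := by exact_mod_cast hd
  have hp0 : 0 < p := lt_of_lt_of_le one_pos hp
  have hsp : 0 < s * p := mul_pos hs hp0
  set β : ℝ := ((d : ℝ) - 3) / 2 with hβdef
  set α : ℝ := ((d : ℝ) + s * p) / 2 with hαdef
  set κ : ℝ := (s * p + 1) / 2 with hκdef
  have hκ : 0 < κ := by rw [hκdef]; linarith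
  have hβ : (-1 : ℝ) < β := by rw [hβdef]; linarith
  have hβ1 : 0 < β + 1 := by linarith
  have hα : 0 < α := by rw [hαdef]; linarith
  have hβα : β - α + 1 = -κ := by rw [hβdef, hαdef, hκdef]; ring
  set C₁ : ℝ := 2 ^ β + 1 with hC₁def
  have h2β : 0 < (2:ℝ) ^ β := Real.rpow_pos_of_pos two_pos β
  have hC₁pos : 0 < C₁ := by rw [hC₁def]; linarith
  have hC₁ : ∀ x : ℝ, 1 ≤ x → x ≤ 2 → x ^ β ≤ C₁ := by
    intro x hx1 hx2
    rcases le_or_gt 0 β with hb | hb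
    · have h := Real.rpow_le_rpow (by linarith) hx2 hb
      rw [hC₁def]; linarith
    · have h := Real.rpow_le_one_of_one_le_of_nonpos hx1 hb.le
      rw [hC₁def]; linarith
  set S : ℝ := 2 * π ^ (((d : ℝ) - 1) / 2) / Real.Gamma (((d : ℝ) - 1) / 2) with hSdef
  have hS : 0 ≤ S := by
    rw [hSdef]
    have : 0 < Real.Gamma (((d : ℝ) - 1) / 2) :=
      Real.Gamma_pos_of_pos (by linarith)
    positivity
  refine ⟨S * (C₁ * (2 / (β + 1) + 4 ^ α / κ)), ?_⟩
  rintro r ⟨hr0, hr1⟩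
  set a : ℝ := (1 - r) ^ 2 with hadef
  have ha0 : 0 < a := by rw [hadef]; exact pow_pos (by linarith) 2
  have ha1 : a < 1 := by rw [hadef]; nlinarith
  set f : ℝ → ℝ := fun t =>
      (1 - t ^ 2) ^ β / (1 - 2 * t * r + r ^ 2) ^ α with hfdef
  -- pointwise facts
  have hfac : ∀ t : ℝ, -1 ≤ t → t ≤ 1 →
      (1 - t ^ 2) ^ β = (1 - t) ^ β * (1 + t) ^ β := by
    intro t h1 h2
    rw [show (1:ℝ) - t ^ 2 = (1 - t) * (1 + t) by ring,
      Real.mul_rpow (by linarith) (by linarith)]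
  have hD : ∀ t : ℝ, t ≤ 1 → a ≤ 1 - 2 * t * r + r ^ 2 := by
    intro t ht; rw [hadef]; nlinarith
  have hfnonneg : ∀ t : ℝ, -1 ≤ t → t ≤ 1 → 0 ≤ f t := by
    intro t h1 h2
    have h' : (0:ℝ) ≤ 1 - t ^ 2 := by nlinarith
    have h'' : (0:ℝ) ≤ 1 - 2 * t * r + r ^ 2 := le_trans ha0.le (hD t h2)
    exact div_nonneg (Real.rpow_nonneg h' β) (Real.rpow_nonneg h'' α)
  have hb₁ : ∀ t ∈ Icc (-1:ℝ) 0, f t ≤ C₁ * (1 + t) ^ β := by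
    rintro t ⟨h1, h2⟩
    have hD1 : (1:ℝ) ≤ 1 - 2 * t * r + r ^ 2 := by nlinarith
    have hDα : (1:ℝ) ≤ (1 - 2 * t * r + r ^ 2) ^ α := by
      calc (1:ℝ) = 1 ^ α := (Real.one_rpow α).symm
        _ ≤ (1 - 2 * t * r + r ^ 2) ^ α := Real.rpow_le_rpow zero_le_one hD1 hα.le
    have hnum : (1 - t ^ 2) ^ β ≤ C₁ * (1 + t) ^ β := by
      rw [hfac t h1 (by linarith)]
      exact mul_le_mul_of_nonneg_right (hC₁ _ (by linarith) (by linarith))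
        (Real.rpow_nonneg (by linarith) _)
    calc f t ≤ (1 - t ^ 2) ^ β :=
          div_le_self (Real.rpow_nonneg (by nlinarith) β) hDα
      _ ≤ C₁ * (1 + t) ^ β := hnum
  have hb₂ : ∀ t ∈ Icc (0:ℝ) (1 - a), f t ≤ C₁ * 4 ^ α * (1 - t) ^ (β - α) := by
    rintro t ⟨h0, h1a⟩
    have h1t : a ≤ 1 - t := by linarith
    have h1tpos : 0 < 1 - t := lt_of_lt_of_le ha0 h1t
    have ht1 : t ≤ 1 := by linarith
    have hDq : (1 - t) / 4 ≤ 1 - 2 * t * r + r ^ 2 := by nlinarith [sq_nonneg (1 - r)]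
    have hden : ((1 - t) / 4) ^ α ≤ (1 - 2 * t * r + r ^ 2) ^ α :=
      Real.rpow_le_rpow (by positivity) hDq hα.le
    have hdenpos : (0:ℝ) < ((1 - t) / 4) ^ α := Real.rpow_pos_of_pos (by positivity) α
    have hnum : (1 - t ^ 2) ^ β ≤ C₁ * (1 - t) ^ β := by
      rw [hfac t (by linarith) ht1]
      calc (1 - t) ^ β * (1 + t) ^ β ≤ (1 - t) ^ β * C₁ :=
            mul_le_mul_of_nonneg_left (hC₁ _ (by linarith) (by linarith))
              (Real.rpow_nonneg h1tpos.le _)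
        _ = C₁ * (1 - t) ^ β := mul_comm _ _
    have key : f t ≤ C₁ * (1 - t) ^ β / ((1 - t) / 4) ^ α :=
      div_le_div₀ (by positivity) hnum hdenpos hden
    calc f t ≤ C₁ * (1 - t) ^ β / ((1 - t) / 4) ^ α := key
      _ = C₁ * 4 ^ α * (1 - t) ^ (β - α) := by
          rw [Real.div_rpow h1tpos.le (by norm_num : (0:ℝ) ≤ 4),
            Real.rpow_sub h1tpos]
          have h4 : (0:ℝ) < (4:ℝ) ^ α := Real.rpow_pos_of_pos (by norm_num) α
          have hta : (0:ℝ) < (1 - t) ^ α := Real.rpow_pos_of_pos h1tpos α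
          field_simp
  have hb₃ : ∀ t ∈ Icc (1 - a) 1, f t ≤ C₁ * a ^ (-α) * (1 - t) ^ β := by
    rintro t ⟨hta, ht1⟩
    have h0t : 0 ≤ t := by linarith
    have hDa := hD t ht1
    have hden : a ^ α ≤ (1 - 2 * t * r + r ^ 2) ^ α :=
      Real.rpow_le_rpow ha0.le hDa hα.le
    have hnum : (1 - t ^ 2) ^ β ≤ C₁ * (1 - t) ^ β := by
      rw [hfac t (by linarith) ht1]
      calc (1 - t) ^ β * (1 + t) ^ β ≤ (1 - t) ^ β * C₁ :=
            mul_le_mul_of_nonneg_left (hC₁ _ (by linarith) (by linarith))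
              (Real.rpow_nonneg (by linarith) _)
        _ = C₁ * (1 - t) ^ β := mul_comm _ _
    calc f t ≤ C₁ * (1 - t) ^ β / a ^ α :=
          div_le_div₀ (mul_nonneg hC₁pos.le (Real.rpow_nonneg (by linarith) _)) hnum
            (Real.rpow_pos_of_pos ha0 α) hden
      _ = C₁ * a ^ (-α) * (1 - t) ^ β := by
          rw [Real.rpow_neg ha0.le]; ring
  -- measurability
  have hfmeas : Measurable f := by
    rw [hfdef]; fun_prop
  have hfm : ∀ c e : ℝ, AEStronglyMeasurable f (volume.restrict (Set.uIoc c e)) :=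
    fun c e => hfmeas.aestronglyMeasurable
  have h1a0 : (0:ℝ) ≤ 1 - a := by linarith
  -- integrability of the bounding functions
  have hg₁i : IntervalIntegrable (fun t => C₁ * (1 + t) ^ β) volume (-1) 0 := by
    have h := (intervalIntegral.intervalIntegrable_rpow' (a := 0) (b := 1) hβ).comp_add_left 1
    norm_num at h
    exact h.const_mul C₁
  have hg₂i : IntervalIntegrable (fun t => C₁ * 4 ^ α * (1 - t) ^ (β - α)) volume 0 (1 - a) := by
    apply ContinuousOn.intervalIntegrable
    apply ContinuousOn.mul continuousOn_const
    apply ContinuousOn.rpow_const (continuous_const.sub continuous_id).continuousOn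
    intro x hx
    rw [uIcc_of_le h1a0] at hx
    exact Or.inl (by have h2 := hx.2; show (1:ℝ) - x ≠ 0; intro h; nlinarith [ha0])
  have hg₃i : IntervalIntegrable (fun t => C₁ * a ^ (-α) * (1 - t) ^ β) volume (1 - a) 1 := by
    have h := (intervalIntegral.intervalIntegrable_rpow' (a := 0) (b := a) hβ).comp_sub_left 1
    norm_num at h
    exact h.symm.const_mul _
  -- integrability of f on the pieces
  have hmono : ∀ (c e : ℝ) (g : ℝ → ℝ), c ≤ e → -1 ≤ c → e ≤ 1 →
      IntervalIntegrable g volume c e → (∀ t ∈ Icc c e, f t ≤ g t) →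
      IntervalIntegrable f volume c e := by
    intro c e g hce hc he hg hle
    apply hg.mono_fun (hfm c e)
    rw [uIoc_of_le hce]
    refine (ae_restrict_iff' measurableSet_Ioc).mpr (Filter.Eventually.of_forall ?_)
    intro x hx
    have hx' : x ∈ Icc c e := ⟨hx.1.le, hx.2⟩
    have h0 := hfnonneg x (by linarith [hx'.1]) (by linarith [hx'.2])
    have h1 := hle x hx'
    simp only [Real.norm_eq_abs]
    rw [abs_of_nonneg h0]
    exact h1.trans (le_abs_self _)
  have hf₁i := hmono (-1) 0 _ (by norm_num) le_rfl (by norm_num) hg₁i hb₁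
  have hf₂i := hmono 0 (1 - a) _ h1a0 (by norm_num) (by linarith) hg₂i hb₂
  have hf₃i := hmono (1 - a) 1 _ (by linarith) (by linarith) le_rfl hg₃i hb₃
  -- computing the bounding integrals
  have hJ₁ : ∫ t in (-1:ℝ)..0, C₁ * (1 + t) ^ β = C₁ * (1 / (β + 1)) := by
    rw [intervalIntegral.integral_const_mul]
    congr 1
    have h := intervalIntegral.integral_comp_add_left (a := -1) (b := 0) (fun x : ℝ => x ^ β) 1
    norm_num at h
    rw [h, integral_rpow (Or.inl hβ), Real.one_rpow,
      Real.zero_rpow (by linarith : β + 1 ≠ 0)]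
    ring
  have hJ₂ : (∫ t in (0:ℝ)..(1 - a), C₁ * 4 ^ α * (1 - t) ^ (β - α))
      ≤ C₁ * 4 ^ α * (a ^ (-κ) / κ) := by
    rw [intervalIntegral.integral_const_mul]
    apply mul_le_mul_of_nonneg_left ?_ (by positivity)
    have h := intervalIntegral.integral_comp_sub_left (a := 0) (b := 1 - a)
      (fun x : ℝ => x ^ (β - α)) 1
    simp only [sub_sub_cancel, sub_zero] at h
    have hne : β - α ≠ -1 := by intro hh; rw [hh] at hβα; norm_num at hβα; linarith
    have h0 : (0:ℝ) ∉ Set.uIcc a (1:ℝ) := by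
      rw [Set.uIcc_of_le ha1.le]
      rintro ⟨h1, -⟩; linarith
    rw [h, integral_rpow (Or.inr ⟨hne, h0⟩), Real.one_rpow, hβα]
    have heq : (1 - a ^ (-κ)) / (-κ) = (a ^ (-κ) - 1) / κ := by
      rw [div_neg, ← neg_div, neg_sub]
    rw [heq]
    exact (div_le_div_iff_of_pos_right hκ).mpr (by linarith)
  have hJ₃ : ∫ t in (1 - a)..1, C₁ * a ^ (-α) * (1 - t) ^ β
      = C₁ * a ^ (-α) * (a ^ (β + 1) / (β + 1)) := by
    rw [intervalIntegral.integral_const_mul]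
    congr 1
    have h := intervalIntegral.integral_comp_sub_left (a := 1 - a) (b := 1)
      (fun x : ℝ => x ^ β) 1
    simp only [sub_self, sub_sub_cancel] at h
    rw [h, integral_rpow (Or.inl hβ), Real.zero_rpow (by linarith : β + 1 ≠ 0)]
    ring
  -- bounding the pieces
  have hI₁ : ∫ t in (-1:ℝ)..0, f t ≤ C₁ * (1 / (β + 1)) := by
    rw [← hJ₁]
    exact intervalIntegral.integral_mono_on (by norm_num) hf₁i hg₁i hb₁
  have hI₂ : ∫ t in (0:ℝ)..(1 - a), f t ≤ C₁ * 4 ^ α * (a ^ (-κ) / κ) :=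
    le_trans (intervalIntegral.integral_mono_on h1a0 hf₂i hg₂i hb₂) hJ₂
  have hI₃ : ∫ t in (1 - a)..1, f t ≤ C₁ * a ^ (-α) * (a ^ (β + 1) / (β + 1)) := by
    rw [← hJ₃]
    exact intervalIntegral.integral_mono_on (by linarith) hf₃i hg₃i hb₃
  -- assembling
  have hIoo : (∫ t in Ioo (-1:ℝ) 1, f t) = ∫ t in (-1:ℝ)..1, f t := by
    rw [intervalIntegral.integral_of_le (by norm_num : (-1:ℝ) ≤ 1),
      integral_Ioc_eq_integral_Ioo]
  have hsplit : (∫ t in (-1:ℝ)..1, f t)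
      = (∫ t in (-1:ℝ)..0, f t) +
        ((∫ t in (0:ℝ)..(1 - a), f t) + ∫ t in (1 - a)..1, f t) := by
    rw [intervalIntegral.integral_add_adjacent_intervals hf₂i hf₃i,
      intervalIntegral.integral_add_adjacent_intervals hf₁i (hf₂i.trans hf₃i)]
  have hIle : (∫ t in Ioo (-1:ℝ) 1, f t)
      ≤ C₁ * (1 / (β + 1)) +
        (C₁ * 4 ^ α * (a ^ (-κ) / κ) + C₁ * a ^ (-α) * (a ^ (β + 1) / (β + 1))) := by
    rw [hIoo, hsplit]
    exact add_le_add hI₁ (add_le_add hI₂ hI₃)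
  have hrpow : (1 - r) ^ (s * p + 1) = a ^ κ := by
    rw [hadef, ← Real.rpow_natCast (1 - r) 2,
      ← Real.rpow_mul (by linarith : (0:ℝ) ≤ 1 - r)]
    congr 1
    rw [hκdef]; push_cast; ring
  rw [hrpow]
  have hA1 : a ^ κ ≤ 1 := Real.rpow_le_one ha0.le ha1.le hκ.le
  have hA0 : (0:ℝ) ≤ a ^ κ := Real.rpow_nonneg ha0.le κ
  have hprod1 : a ^ κ * a ^ (-κ) = 1 := by
    rw [← Real.rpow_add ha0]; norm_num
  have hprod2 : a ^ κ * (a ^ (-α) * a ^ (β + 1)) = 1 := by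
    rw [← Real.rpow_add ha0, ← Real.rpow_add ha0,
      show κ + (-α + (β + 1)) = 0 by linarith [hβα]]
    exact Real.rpow_zero a
  calc a ^ κ * (S * ∫ t in Ioo (-1:ℝ) 1, f t)
      = S * (a ^ κ * ∫ t in Ioo (-1:ℝ) 1, f t) := by ring
    _ ≤ S * (a ^ κ * (C₁ * (1 / (β + 1)) +
        (C₁ * 4 ^ α * (a ^ (-κ) / κ) + C₁ * a ^ (-α) * (a ^ (β + 1) / (β + 1))))) :=
        mul_le_mul_of_nonneg_left (mul_le_mul_of_nonneg_left hIle hA0) hS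
    _ = S * (a ^ κ * (C₁ * (1 / (β + 1))) +
        ((C₁ * 4 ^ α / κ) * (a ^ κ * a ^ (-κ)) +
          (C₁ / (β + 1)) * (a ^ κ * (a ^ (-α) * a ^ (β + 1))))) := by ring
    _ = S * (a ^ κ * (C₁ * (1 / (β + 1))) + (C₁ * 4 ^ α / κ + C₁ / (β + 1))) := by
        rw [hprod1, hprod2]; ring
    _ ≤ S * (C₁ * (1 / (β + 1)) + (C₁ * 4 ^ α / κ + C₁ / (β + 1))) := by
        apply mul_le_mul_of_nonneg_left ?_ hS
        have h := mul_le_of_le_one_left (by positivity : (0:ℝ) ≤ C₁ * (1 / (β + 1))) hA1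
        linarith
    _ = S * (C₁ * (2 / (β + 1) + 4 ^ α / κ)) := by ring
end

section
/- Let d ≥ 1, s ∈ (0,1), p ≥ 1, α, β, α+β ∈ (-1, sp), and 1+α+β ≠ sp. Then the integral D := (π^{(d-1)/2}·Γ((1+sp)/2)/Γ((d+sp)/2)) · ∫₀¹ (t^α + t^β)·|1 - t^{-(1+α+β-sp)/p}|^p / (1-t)^{1+sp} dt is finite and strictly positive. -/
open Real Set MeasureTheory

lemma aux_rpow_le {c t : ℝ} (h1 : 1/2 ≤ t) (h2 : t ≤ 1) : t ^ c ≤ max 1 ((1/2:ℝ) ^ c) := by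
  rcases le_or_gt 0 c with hc | hc
  · exact le_max_of_le_left (Real.rpow_le_one (by linarith) h2 hc)
  · exact le_max_of_le_right (Real.rpow_le_rpow_of_nonpos (by norm_num) h1 hc.le)

lemma aux_int_one_sub {q : ℝ} (hq : -1 < q) :
    IntegrableOn (fun t : ℝ => (1 - t) ^ q) (Ioo (1/2) 1) := by
  have h := (intervalIntegral.intervalIntegrable_rpow' (a := 0) (b := 1/2) hq).comp_sub_left 1
  have h2 := h.symm
  norm_num at h2
  rwa [intervalIntegrable_iff_integrableOn_Ioo_of_le (by norm_num)] at h2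

/-- The sharp constant `D` of the weighted fractional Hardy inequality on the half-space,
`D = (π^{(d-1)/2} Γ((1+sp)/2)/Γ((d+sp)/2)) ∫₀¹ (t^α+t^β)|1-t^{-(1+α+β-sp)/p}|^p (1-t)^{-1-sp} dt`,
is finite (the integral converges) and strictly positive. -/
theorem stmt_7 (d : ℕ) (s p α β : ℝ) (hd : 1 ≤ d) (hs : 0 < s) (hs1 : s < 1) (hp : 1 ≤ p)
    (hα : α ∈ Ioo (-1 : ℝ) (s * p)) (hβ : β ∈ Ioo (-1 : ℝ) (s * p))
    (hαβ : α + β ∈ Ioo (-1 : ℝ) (s * p)) (hne : 1 + α + β ≠ s * p) :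
    IntegrableOn
      (fun t : ℝ =>
        (t ^ α + t ^ β) * |1 - t ^ (-((1 + α + β - s * p) / p))| ^ p / (1 - t) ^ (1 + s * p))
      (Ioo 0 1) ∧
    0 < π ^ (((d : ℝ) - 1) / 2) * Real.Gamma ((1 + s * p) / 2) /
          Real.Gamma (((d : ℝ) + s * p) / 2) *
        ∫ t in Ioo (0 : ℝ) 1,
          (t ^ α + t ^ β) * |1 - t ^ (-((1 + α + β - s * p) / p))| ^ p /
            (1 - t) ^ (1 + s * p) := by
  obtain ⟨hα1, hα2⟩ := hα
  obtain ⟨hβ1, hβ2⟩ := hβ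
  obtain ⟨hαβ1, hαβ2⟩ := hαβ
  have hp0 : (0:ℝ) < p := lt_of_lt_of_le one_pos hp
  have hsp : 0 < s * p := mul_pos hs hp0
  set e : ℝ := -((1 + α + β - s * p) / p) with he_def
  have hep : e * p = s * p - 1 - α - β := by rw [he_def, neg_mul, div_mul_cancel₀ _ hp0.ne']; ring
  have he : e ≠ 0 := by
    intro h
    rw [he_def, neg_eq_zero, div_eq_zero_iff] at h
    rcases h with h | h
    · exact hne (by linarith)
    · exact hp0.ne' h
  set f : ℝ → ℝ := fun t => (t ^ α + t ^ β) * |1 - t ^ e| ^ p / (1 - t) ^ (1 + s * p)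
    with hf_def
  have hf_nonneg : ∀ t ∈ Ioo (0:ℝ) 1, 0 ≤ f t := by
    intro t ht
    have ht0 : (0:ℝ) ≤ t := ht.1.le
    have ht1 : (0:ℝ) ≤ 1 - t := by linarith [ht.2]
    positivity
  have hf_pos : ∀ t ∈ Ioo (0:ℝ) 1, 0 < f t := by
    intro t ht
    have h1 : t ^ e ≠ 1 := by
      rcases lt_or_gt_of_ne he with h | h
      · exact ne_of_gt (Real.one_lt_rpow_of_pos_of_lt_one_of_neg ht.1 ht.2 h)
      · exact ne_of_lt (Real.rpow_lt_one ht.1.le ht.2 h)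
    apply div_pos
    · apply mul_pos (add_pos (Real.rpow_pos_of_pos ht.1 _) (Real.rpow_pos_of_pos ht.1 _))
      exact Real.rpow_pos_of_pos (abs_pos.mpr (sub_ne_zero.mpr (Ne.symm h1))) p
    · exact Real.rpow_pos_of_pos (by linarith [ht.2]) _
  have hcont : ContinuousOn f (Ioo (0:ℝ) 1) := by
    apply ContinuousOn.div
    · apply ContinuousOn.mul
      · exact (continuousOn_id.rpow_const (fun x hx => Or.inl hx.1.ne')).add
          (continuousOn_id.rpow_const (fun x hx => Or.inl hx.1.ne'))
      · exact (((continuousOn_const.sub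
          (continuousOn_id.rpow_const (fun x hx => Or.inl hx.1.ne'))).abs).rpow_const
          (fun x hx => Or.inr (by linarith)))
    · exact (continuousOn_const.sub continuousOn_id).rpow_const
        (fun x hx => Or.inl (by show (1:ℝ) - x ≠ 0; intro h; nlinarith [hx.2, sub_eq_zero.mp h]))
    · intro x hx
      exact ne_of_gt (Real.rpow_pos_of_pos (by linarith [hx.2]) _)
  -- integrability near 0
  have hi1 : IntegrableOn f (Ioo 0 (1/2)) := by
    have hea : -1 < α + e * p := by rw [hep]; linarith
    have heb : -1 < β + e * p := by rw [hep]; linarith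
    have hg : IntegrableOn
        (fun t : ℝ => ((1/2:ℝ) ^ (1 + s * p))⁻¹ *
          (t ^ α + t ^ β + (t ^ (α + e * p) + t ^ (β + e * p)))) (Ioo 0 (1/2)) := by
      have i1 := (intervalIntegral.integrableOn_Ioo_rpow_iff (s := α) (t := (1/2:ℝ)) (by norm_num)).mpr hα1
      have i2 := (intervalIntegral.integrableOn_Ioo_rpow_iff (s := β) (t := (1/2:ℝ)) (by norm_num)).mpr hβ1
      have i3 := (intervalIntegral.integrableOn_Ioo_rpow_iff (s := α + e * p) (t := (1/2:ℝ)) (by norm_num)).mpr hea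
      have i4 := (intervalIntegral.integrableOn_Ioo_rpow_iff (s := β + e * p) (t := (1/2:ℝ)) (by norm_num)).mpr heb
      exact ((i1.add i2).add (i3.add i4)).const_mul _
    apply Integrable.mono' hg
    · exact (hcont.mono (Ioo_subset_Ioo le_rfl (by norm_num))).aestronglyMeasurable
        measurableSet_Ioo
    · filter_upwards [ae_restrict_mem measurableSet_Ioo] with t ht
      have ht0 : (0:ℝ) < t := ht.1
      have ht2 : t < 1/2 := ht.2
      rw [Real.norm_eq_abs, abs_of_nonneg (hf_nonneg t ⟨ht0, by linarith⟩)]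
      have hN1 : |1 - t ^ e| ^ p ≤ 1 + t ^ (e * p) := by
        rcases le_or_gt (t ^ e) 1 with h | h
        · calc |1 - t ^ e| ^ p ≤ 1 ^ p := by
                apply Real.rpow_le_rpow (abs_nonneg _) _ (by linarith)
                rw [abs_of_nonneg (by linarith)]
                have := Real.rpow_pos_of_pos ht0 e
                linarith
            _ = 1 := Real.one_rpow p
            _ ≤ 1 + t ^ (e * p) := le_add_of_nonneg_right (Real.rpow_nonneg ht0.le _)
        · calc |1 - t ^ e| ^ p ≤ (t ^ e) ^ p := by
                apply Real.rpow_le_rpow (abs_nonneg _) _ (by linarith)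
                rw [abs_of_nonpos (by linarith)]
                linarith
            _ = t ^ (e * p) := (Real.rpow_mul ht0.le e p).symm
            _ ≤ 1 + t ^ (e * p) := le_add_of_nonneg_left zero_le_one
      have hNnn : (0:ℝ) ≤ t ^ α + t ^ β :=
        add_nonneg (Real.rpow_nonneg ht0.le _) (Real.rpow_nonneg ht0.le _)
      have hD : ((1/2:ℝ)) ^ (1 + s * p) ≤ (1 - t) ^ (1 + s * p) :=
        Real.rpow_le_rpow (by norm_num) (by linarith) (by linarith)
      have hDpos : (0:ℝ) < ((1/2:ℝ)) ^ (1 + s * p) := Real.rpow_pos_of_pos (by norm_num) _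
      calc f t ≤ (t ^ α + t ^ β) * (1 + t ^ (e * p)) / ((1/2:ℝ) ^ (1 + s * p)) := by
            apply div_le_div₀ (by positivity) _ hDpos hD
            exact mul_le_mul_of_nonneg_left hN1 hNnn
        _ = ((1/2:ℝ) ^ (1 + s * p))⁻¹ *
              (t ^ α + t ^ β + (t ^ (α + e * p) + t ^ (β + e * p))) := by
            rw [Real.rpow_add ht0 α (e * p), Real.rpow_add ht0 β (e * p)]
            field_simp
  -- integrability near 1
  have hi2 : IntegrableOn f (Ioo (1/2) 1) := by
    set K : ℝ := |e| * max 1 ((1/2:ℝ) ^ (e - 1)) with hK_def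
    have hK0 : 0 ≤ K :=
      mul_nonneg (abs_nonneg e) (le_trans zero_le_one (le_max_left _ _))
    have hmvt : ∀ t ∈ Icc (1/2:ℝ) 1, |1 - t ^ e| ≤ K * (1 - t) := by
      intro t ht
      have h := (convex_Icc (1/2:ℝ) 1).norm_image_sub_le_of_norm_hasDerivWithin_le
        (f := fun x : ℝ => x ^ e) (f' := fun x : ℝ => e * x ^ (e - 1)) (C := K)
        (fun x hx => (Real.hasDerivAt_rpow_const
          (Or.inl (by intro h0; rw [h0] at hx; norm_num at hx))).hasDerivWithinAt)
        (fun x hx => by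
          rw [Real.norm_eq_abs, abs_mul, abs_of_nonneg (Real.rpow_nonneg (by linarith [hx.1]) _)]
          exact mul_le_mul_of_nonneg_left (aux_rpow_le hx.1 hx.2) (abs_nonneg e))
        (right_mem_Icc.mpr (by norm_num)) ht
      calc |1 - t ^ e| = ‖t ^ e - (1:ℝ) ^ e‖ := by
            rw [Real.one_rpow, Real.norm_eq_abs, abs_sub_comm]
        _ ≤ K * ‖t - 1‖ := h
        _ = K * (1 - t) := by
            rw [Real.norm_eq_abs, abs_sub_comm, abs_of_nonneg (by linarith [ht.2])]
    set M : ℝ := max 1 ((1/2:ℝ) ^ α) + max 1 ((1/2:ℝ) ^ β) with hM_def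
    have hM0 : 0 ≤ M :=
      add_nonneg (le_trans zero_le_one (le_max_left _ _)) (le_trans zero_le_one (le_max_left _ _))
    have hq : -1 < p - (1 + s * p) := by nlinarith
    have hg : IntegrableOn (fun t : ℝ => M * K ^ p * (1 - t) ^ (p - (1 + s * p)))
        (Ioo (1/2) 1) := (aux_int_one_sub hq).const_mul _
    apply Integrable.mono' hg
    · exact (hcont.mono (Ioo_subset_Ioo (by norm_num) le_rfl)).aestronglyMeasurable
        measurableSet_Ioo
    · filter_upwards [ae_restrict_mem measurableSet_Ioo] with t ht
      have ht0 : (0:ℝ) < t := lt_trans (by norm_num) ht.1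
      have h1t : (0:ℝ) < 1 - t := by linarith [ht.2]
      rw [Real.norm_eq_abs, abs_of_nonneg (hf_nonneg t ⟨ht0, ht.2⟩)]
      have hb1 : t ^ α + t ^ β ≤ M :=
        add_le_add (aux_rpow_le ht.1.le ht.2.le) (aux_rpow_le ht.1.le ht.2.le)
      have hb2 : |1 - t ^ e| ^ p ≤ K ^ p * (1 - t) ^ p := by
        rw [← Real.mul_rpow hK0 h1t.le]
        exact Real.rpow_le_rpow (abs_nonneg _) (hmvt t ⟨ht.1.le, ht.2.le⟩) (by linarith)
      calc f t ≤ M * (K ^ p * (1 - t) ^ p) / (1 - t) ^ (1 + s * p) := by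
            apply (div_le_div_iff_of_pos_right (Real.rpow_pos_of_pos h1t _)).mpr
            exact mul_le_mul hb1 hb2 (Real.rpow_nonneg (abs_nonneg _) _) hM0
        _ = M * K ^ p * (1 - t) ^ (p - (1 + s * p)) := by
            rw [Real.rpow_sub h1t]
            ring
  have hi : IntegrableOn f (Ioo 0 1) := by
    have hsub : Ioo (0:ℝ) 1 ⊆ Ioo 0 (1/2) ∪ Ico (1/2) 1 := by
      intro x hx
      rcases lt_or_ge x (1/2) with h | h
      · exact Or.inl ⟨hx.1, h⟩
      · exact Or.inr ⟨h, hx.2⟩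
    exact (hi1.union ((integrableOn_Ico_iff_integrableOn_Ioo).mpr hi2)).mono_set hsub
  refine ⟨hi, mul_pos ?_ ?_⟩
  · apply div_pos
    · exact mul_pos (Real.rpow_pos_of_pos pi_pos _) (Real.Gamma_pos_of_pos (by positivity))
    · apply Real.Gamma_pos_of_pos
      have hd1 : (1:ℝ) ≤ (d:ℝ) := by exact_mod_cast hd
      linarith
  · rw [setIntegral_pos_iff_support_of_nonneg_ae ?_ hi]
    · refine lt_of_lt_of_le ?_ (measure_mono (fun t ht => ⟨(hf_pos t ht).ne', ht⟩))
      rw [Real.volume_Ioo]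
      norm_num
    · filter_upwards [ae_restrict_mem measurableSet_Ioo] with t ht using hf_nonneg t ht
end

section
/- Let 0 < s < 1, p ≥ 1, α, β, α+β ∈ (-sp, d). Then the integral C := ∫₀¹ r^{sp-1}·(r^α + r^β)·|1 - r^{(d-α-β-sp)/p}|^p · Φ_{d,s,p}(r) dr is finite, where Φ_{d,s,p}(r) = (1-r)^{-1-sp} + (1+r)^{-1-sp} when d = 1. Moreover C > 0 if additionally sp+α+β ≠ d. -/
open Real Set MeasureTheory

private lemma beta_integrable {a b : ℝ} (ha : -1 < a) (hb : -1 < b) :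
    IntegrableOn (fun r : ℝ => r ^ a * (1 - r) ^ b) (Ioo 0 1) := by
  have hu : 0 < (↑(a + 1) : ℂ).re := by simp; linarith
  have hv : 0 < (↑(b + 1) : ℂ).re := by simp; linarith
  have h := Complex.betaIntegral_convergent hu hv
  rw [intervalIntegrable_iff_integrableOn_Ioo_of_le (by norm_num)] at h
  refine MeasureTheory.IntegrableOn.congr_fun h.norm ?_ measurableSet_Ioo
  intro x hx
  have hx0 : (0:ℝ) < x := hx.1
  have hx1 : (0:ℝ) < 1 - x := by linarith [hx.2]
  have e1 : ((1:ℂ) - (x:ℂ)) = ((1 - x : ℝ) : ℂ) := by push_cast; ring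
  simp only
  rw [norm_mul, e1,
    Complex.norm_cpow_eq_rpow_re_of_pos hx0, Complex.norm_cpow_eq_rpow_re_of_pos hx1]
  norm_num

private lemma bern {r γ : ℝ} (hr0 : 0 < r) (hr1 : r < 1) (hγ : 0 ≤ γ) :
    1 - r ^ γ ≤ max γ 1 * (1 - r) := by
  rcases le_total γ 1 with h | h
  · have h2 : r ^ (1:ℝ) ≤ r ^ γ := Real.rpow_le_rpow_of_exponent_ge hr0 hr1.le h
    rw [Real.rpow_one] at h2
    nlinarith [le_max_right γ 1]
  · have h2 := one_add_mul_self_le_rpow_one_add (s := r - 1) (by linarith) h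
    have e : 1 + (r - 1) = r := by ring
    rw [e] at h2
    nlinarith [le_max_left γ 1]

private lemma abs_bound {r γ p : ℝ} (hr0 : 0 < r) (hr1 : r < 1) (hp : 0 < p) :
    |1 - r ^ γ| ^ p ≤ (max |γ| 1) ^ p * (r ^ (min (γ * p) 0) * (1 - r) ^ p) := by
  have hM : 0 ≤ max |γ| 1 * (1 - r) := by
    have : (0:ℝ) ≤ 1 - r := by linarith
    positivity
  rcases le_or_gt 0 γ with hγ | hγ
  · have hm : min (γ * p) 0 = 0 := min_eq_right (mul_nonneg hγ hp.le)
    have h1 : r ^ γ ≤ 1 := Real.rpow_le_one hr0.le hr1.le hγ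
    have h2 : |1 - r ^ γ| ≤ max |γ| 1 * (1 - r) := by
      rw [abs_of_nonneg (by linarith)]
      calc 1 - r ^ γ ≤ max γ 1 * (1 - r) := bern hr0 hr1 hγ
        _ ≤ max |γ| 1 * (1 - r) := by
            apply mul_le_mul_of_nonneg_right _ (by linarith)
            exact max_le_max (le_abs_self γ) le_rfl
    calc |1 - r ^ γ| ^ p ≤ (max |γ| 1 * (1 - r)) ^ p :=
          Real.rpow_le_rpow (abs_nonneg _) h2 hp.le
      _ = (max |γ| 1) ^ p * (1 - r) ^ p :=
          Real.mul_rpow (le_trans (abs_nonneg γ) (le_max_left _ _)) (by linarith)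
      _ = (max |γ| 1) ^ p * (r ^ (min (γ * p) 0) * (1 - r) ^ p) := by
          rw [hm, Real.rpow_zero, one_mul]
  · have h1 : 1 < r ^ γ :=
      (Real.one_lt_rpow_iff_of_pos hr0).mpr (Or.inr ⟨hr1, hγ⟩)
    have habs : |1 - r ^ γ| = r ^ γ - 1 := by
      rw [abs_sub_comm]; exact abs_of_nonneg (by linarith)
    have hbern : 1 - r ^ (-γ) ≤ max |γ| 1 * (1 - r) := by
      have := bern hr0 hr1 (by linarith : 0 ≤ -γ)
      rwa [show max (-γ) 1 = max |γ| 1 by rw [abs_of_neg hγ]] at this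
    have h2 : r ^ γ - 1 ≤ r ^ γ * (max |γ| 1 * (1 - r)) := by
      have e : r ^ γ - 1 = r ^ γ * (1 - r ^ (-γ)) := by
        rw [mul_sub, mul_one, ← Real.rpow_add hr0]; simp
      rw [e]
      exact mul_le_mul_of_nonneg_left hbern (Real.rpow_nonneg hr0.le γ)
    have hm : min (γ * p) 0 = γ * p := min_eq_left (by nlinarith)
    calc |1 - r ^ γ| ^ p = (r ^ γ - 1) ^ p := by rw [habs]
      _ ≤ (r ^ γ * (max |γ| 1 * (1 - r))) ^ p :=
          Real.rpow_le_rpow (by linarith) h2 hp.le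
      _ = (r ^ γ) ^ p * ((max |γ| 1) ^ p * (1 - r) ^ p) := by
          rw [Real.mul_rpow (Real.rpow_nonneg hr0.le γ) hM,
            Real.mul_rpow (le_trans (abs_nonneg γ) (le_max_left _ _)) (by linarith)]
      _ = (max |γ| 1) ^ p * (r ^ (min (γ * p) 0) * (1 - r) ^ p) := by
          rw [hm, ← Real.rpow_mul hr0.le]; ring

/-- For `d = 1`, the constant
`C = ∫₀¹ r^{sp-1}(r^α+r^β)|1-r^{(1-α-β-sp)/p}|^p Φ_{1,s,p}(r) dr` with
`Φ_{1,s,p}(r) = (1-r)^{-1-sp} + (1+r)^{-1-sp}` is finite, and positive if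
`sp + α + β ≠ 1`. -/
theorem stmt_8 (s p α β : ℝ) (hs : 0 < s) (hs1 : s < 1) (hp : 1 ≤ p)
    (hα : α ∈ Ioo (-(s * p)) (1 : ℝ)) (hβ : β ∈ Ioo (-(s * p)) (1 : ℝ))
    (hαβ : α + β ∈ Ioo (-(s * p)) (1 : ℝ)) :
    IntegrableOn
      (fun r : ℝ =>
        r ^ (s * p - 1) * (r ^ α + r ^ β) * |1 - r ^ ((1 - α - β - s * p) / p)| ^ p *
          ((1 - r) ^ (-1 - s * p) + (1 + r) ^ (-1 - s * p)))
      (Ioo 0 1) ∧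
    (s * p + α + β ≠ 1 →
      0 < ∫ r in Ioo (0 : ℝ) 1,
        r ^ (s * p - 1) * (r ^ α + r ^ β) * |1 - r ^ ((1 - α - β - s * p) / p)| ^ p *
          ((1 - r) ^ (-1 - s * p) + (1 + r) ^ (-1 - s * p))) := by
  obtain ⟨hα1, hα2⟩ := hα
  obtain ⟨hβ1, hβ2⟩ := hβ
  obtain ⟨hαβ1, hαβ2⟩ := hαβ
  have hp0 : 0 < p := lt_of_lt_of_le one_pos hp
  have hsp : 0 < s * p := mul_pos hs hp0
  set γ : ℝ := (1 - α - β - s * p) / p with hγdef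
  have hγp : γ * p = 1 - α - β - s * p := div_mul_cancel₀ _ (ne_of_gt hp0)
  set m : ℝ := min (1 - α - β - s * p) 0 with hmdef
  set f : ℝ → ℝ := fun r =>
    r ^ (s * p - 1) * (r ^ α + r ^ β) * |1 - r ^ γ| ^ p *
      ((1 - r) ^ (-1 - s * p) + (1 + r) ^ (-1 - s * p)) with hfdef
  have ha1 : -1 < s * p - 1 + α + m := by
    rcases le_total (1 - α - β - s * p) 0 with h | h
    · rw [hmdef, min_eq_left h]; linarith
    · rw [hmdef, min_eq_right h]; linarith
  have ha2 : -1 < s * p - 1 + β + m := by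
    rcases le_total (1 - α - β - s * p) 0 with h | h
    · rw [hmdef, min_eq_left h]; linarith
    · rw [hmdef, min_eq_right h]; linarith
  have hb : -1 < p - 1 - s * p := by nlinarith
  have hfpos : ∀ r ∈ Ioo (0:ℝ) 1, 0 ≤ f r := by
    intro r hr
    have h0 : (0:ℝ) < r := hr.1
    have h1 : (0:ℝ) < 1 - r := by linarith [hr.2]
    have h2 : (0:ℝ) < 1 + r := by linarith [hr.1]
    rw [hfdef]
    positivity
  have hmeas : AEStronglyMeasurable f (volume.restrict (Ioo (0:ℝ) 1)) := by
    apply ContinuousOn.aestronglyMeasurable _ measurableSet_Ioo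
    intro r hr
    apply ContinuousAt.continuousWithinAt
    have h0 : r ≠ 0 := ne_of_gt hr.1
    have h1 : (1:ℝ) - r ≠ 0 := by intro hc; have := hr.2; linarith
    have h2 : (1:ℝ) + r ≠ 0 := by intro hc; have := hr.1; linarith
    exact (((Real.continuousAt_rpow_const r _ (Or.inl h0)).mul
      ((Real.continuousAt_rpow_const r α (Or.inl h0)).add
        (Real.continuousAt_rpow_const r β (Or.inl h0)))).mul
      (((continuousAt_const.sub (Real.continuousAt_rpow_const r γ (Or.inl h0))).abs).rpow_const
        (Or.inr hp0.le))).mul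
      (((continuousAt_const.sub continuousAt_id).rpow_const (Or.inl h1)).add
       ((continuousAt_const.add continuousAt_id).rpow_const (Or.inl h2)))
  have hdom : ∀ r ∈ Ioo (0:ℝ) 1, f r ≤ (max |γ| 1) ^ p *
      ((r ^ (s * p - 1 + α + m) + r ^ (s * p - 1 + β + m)) * ((1 - r) ^ (p - 1 - s * p) + 1)) := by
    intro r hr
    obtain ⟨hr0, hr1⟩ := hr
    have h1r : (0:ℝ) < 1 - r := by linarith
    have h2r : (0:ℝ) < 1 + r := by linarith
    have habs := abs_bound (γ := γ) hr0 hr1 hp0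
    rw [hγp, ← hmdef] at habs
    have step1 : f r ≤ r ^ (s * p - 1) * (r ^ α + r ^ β) *
        ((max |γ| 1) ^ p * (r ^ m * (1 - r) ^ p)) *
        ((1 - r) ^ (-1 - s * p) + (1 + r) ^ (-1 - s * p)) := by
      rw [hfdef]
      apply mul_le_mul_of_nonneg_right (mul_le_mul_of_nonneg_left habs (by positivity))
        (by positivity)
    refine step1.trans ?_
    have hΦ : (1 - r) ^ p * ((1 - r) ^ (-1 - s * p) + (1 + r) ^ (-1 - s * p)) ≤
        (1 - r) ^ (p - 1 - s * p) + 1 := by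
      rw [mul_add, ← Real.rpow_add h1r, show p + (-1 - s * p) = p - 1 - s * p by ring]
      have b1 : (1 - r) ^ p ≤ 1 := Real.rpow_le_one h1r.le (by linarith) hp0.le
      have b2 : (1 + r) ^ (-1 - s * p) ≤ 1 :=
        Real.rpow_le_one_of_one_le_of_nonpos (by linarith) (by nlinarith)
      nlinarith [Real.rpow_nonneg h1r.le p, Real.rpow_nonneg h2r.le (-1 - s * p)]
    have key : r ^ (s * p - 1) * (r ^ α + r ^ β) * r ^ m =
        r ^ (s * p - 1 + α + m) + r ^ (s * p - 1 + β + m) := by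
      rw [mul_add, add_mul, ← Real.rpow_add hr0, ← Real.rpow_add hr0, ← Real.rpow_add hr0,
        ← Real.rpow_add hr0]
    calc r ^ (s * p - 1) * (r ^ α + r ^ β) * ((max |γ| 1) ^ p * (r ^ m * (1 - r) ^ p)) *
          ((1 - r) ^ (-1 - s * p) + (1 + r) ^ (-1 - s * p))
        = (max |γ| 1) ^ p * ((r ^ (s * p - 1) * (r ^ α + r ^ β) * r ^ m) *
            ((1 - r) ^ p * ((1 - r) ^ (-1 - s * p) + (1 + r) ^ (-1 - s * p)))) := by ring
      _ = (max |γ| 1) ^ p * ((r ^ (s * p - 1 + α + m) + r ^ (s * p - 1 + β + m)) *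
            ((1 - r) ^ p * ((1 - r) ^ (-1 - s * p) + (1 + r) ^ (-1 - s * p)))) := by rw [key]
      _ ≤ (max |γ| 1) ^ p * ((r ^ (s * p - 1 + α + m) + r ^ (s * p - 1 + β + m)) *
            ((1 - r) ^ (p - 1 - s * p) + 1)) := by
          apply mul_le_mul_of_nonneg_left _ (Real.rpow_nonneg (by positivity) p)
          apply mul_le_mul_of_nonneg_left hΦ
          positivity
  have hgint : IntegrableOn (fun r : ℝ => (max |γ| 1) ^ p *
      ((r ^ (s * p - 1 + α + m) + r ^ (s * p - 1 + β + m)) *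
        ((1 - r) ^ (p - 1 - s * p) + 1))) (Ioo 0 1) := by
    apply Integrable.const_mul
    have h1 := beta_integrable ha1 hb
    have h2 := beta_integrable ha2 hb
    have h3 := beta_integrable ha1 (show (-1:ℝ) < 0 by norm_num)
    have h4 := beta_integrable ha2 (show (-1:ℝ) < 0 by norm_num)
    refine MeasureTheory.IntegrableOn.congr_fun ((h1.add h3).add (h2.add h4)) ?_ measurableSet_Ioo
    intro x _
    simp only [Pi.add_apply, Real.rpow_zero, mul_one]
    ring
  have hint : IntegrableOn f (Ioo 0 1) := by
    apply Integrable.mono' hgint hmeas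
    filter_upwards [ae_restrict_mem measurableSet_Ioo] with r hr
    rw [Real.norm_eq_abs, abs_of_nonneg (hfpos r hr)]
    exact hdom r hr
  refine ⟨hint, fun hne => ?_⟩
  have hγ0 : γ ≠ 0 := by
    rw [hγdef]
    intro hc
    rcases div_eq_zero_iff.mp hc with h | h
    · exact hne (by linarith)
    · exact absurd h (ne_of_gt hp0)
  have hpos : ∀ r ∈ Ioo (0:ℝ) 1, 0 < f r := by
    intro r hr
    obtain ⟨hr0, hr1⟩ := hr
    have hne1 : r ^ γ ≠ 1 := by
      rcases lt_or_gt_of_ne hγ0 with h | h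
      · exact ne_of_gt ((Real.one_lt_rpow_iff_of_pos hr0).mpr (Or.inr ⟨hr1, h⟩))
      · exact ne_of_lt (Real.rpow_lt_one hr0.le hr1 h)
    have habs : 0 < |1 - r ^ γ| := abs_pos.mpr (sub_ne_zero.mpr (Ne.symm hne1))
    have h1r : (0:ℝ) < 1 - r := by linarith
    have h2r : (0:ℝ) < 1 + r := by linarith
    exact mul_pos (mul_pos (mul_pos (Real.rpow_pos_of_pos hr0 _)
      (add_pos (Real.rpow_pos_of_pos hr0 _) (Real.rpow_pos_of_pos hr0 _)))
      (Real.rpow_pos_of_pos habs p))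
      (add_pos (Real.rpow_pos_of_pos h1r _) (Real.rpow_pos_of_pos h2r _))
  have hnn : 0 ≤ᵐ[volume.restrict (Ioo (0:ℝ) 1)] f := by
    filter_upwards [ae_restrict_mem measurableSet_Ioo] with r hr
    exact hfpos r hr
  rw [setIntegral_pos_iff_support_of_nonneg_ae hnn hint]
  have hsub : Ioo (0:ℝ) 1 ⊆ Function.support f ∩ Ioo 0 1 :=
    fun r hr => ⟨ne_of_gt (hpos r hr), hr⟩
  calc (0:ENNReal) < volume (Ioo (0:ℝ) 1) := by simp
    _ ≤ volume (Function.support f ∩ Ioo 0 1) := measure_mono hsub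
end
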